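/- arXiv:2201.01802 — 2 statements merged into one kernel-verified Lean document; each statement's English description precedes it below -/
import Mathlib

section
/- Let N be even and let γ^0, …, γ^{N-1} be d×d complex matrices satisfying the Clifford relations γ^μ γ^ν + γ^ν γ^μ = 2 g^{μν} 1_d. Then the 2^N matrices G^r obtained as products γ^{μ_1} ⋯ γ^{μ_p} over all strictly increasing tuples (including the empty product 1_d) are linearly independent over ℂ; consequently d^2 ≥ 2^N, i.e. d ≥ 2^{N/2}. -/
open Matrix

namespace CliffAux

variable {N d : ℕ} {γ : Fin N → Matrix (Fin d) (Fin d) ℂ}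
  (hγ : ∀ μ ν : Fin N, γ μ * γ ν + γ ν * γ μ =
      (2 * (if μ = ν then (if (μ : ℕ) = 0 then (1 : ℂ) else -1) else 0)) • 1)

noncomputable def ε (μ : Fin N) : ℂ := if (μ : ℕ) = 0 then 1 else -1

lemma ε_ne_zero (μ : Fin N) : ε μ ≠ 0 := by
  unfold ε; split <;> norm_num

include hγ

lemma sq (μ : Fin N) : γ μ * γ μ = ε μ • (1 : Matrix (Fin d) (Fin d) ℂ) := by
  have h := hγ μ μ
  rw [if_pos rfl] at h
  have h2 : (2 : ℂ) • (γ μ * γ μ) = (2 : ℂ) • (ε μ • (1 : Matrix (Fin d) (Fin d) ℂ)) := by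
    rw [two_smul, h, ε, smul_smul]
  exact smul_right_injective _ (two_ne_zero) h2

lemma anticomm {μ ν : Fin N} (h : μ ≠ ν) : γ μ * γ ν = -(γ ν * γ μ) := by
  have h2 := hγ μ ν
  rw [if_neg h] at h2
  simp only [mul_zero, zero_smul] at h2
  exact eq_neg_of_add_eq_zero_left h2

/-- Moving `γ ρ` across a product picks up `(-1)^(# entries ≠ ρ)`. -/
lemma move (ρ : Fin N) : ∀ l : List (Fin N),
    γ ρ * (l.map γ).prod =
      ((-1 : ℂ) ^ (l.countP (fun x => x ≠ ρ))) • ((l.map γ).prod * γ ρ)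
  | [] => by simp
  | a :: t => by
    have ih := move ρ t
    simp only [List.map_cons, List.prod_cons, List.countP_cons]
    by_cases ha : a = ρ
    · subst ha
      have : γ a * (γ a * (t.map γ).prod) = γ a * (γ a * (t.map γ).prod) := rfl
      rw [show (decide ¬a = a) = false by simp]
      calc γ a * (γ a * (List.map γ t).prod)
          = γ a * (((-1 : ℂ) ^ (t.countP (fun x => x ≠ a))) • ((t.map γ).prod * γ a)) := by
            rw [ih]
        _ = ((-1 : ℂ) ^ (t.countP (fun x => x ≠ a) + if false = true then 1 else 0)) •
              (γ a * (t.map γ).prod * γ a) := by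
            rw [mul_smul_comm, pow_add]; simp [mul_assoc]
    · rw [show (decide ¬a = ρ) = true by simp [ha]]
      have hac : γ ρ * γ a = -(γ a * γ ρ) := anticomm hγ (fun h => ha h.symm)
      calc γ ρ * (γ a * (List.map γ t).prod)
          = (γ ρ * γ a) * (List.map γ t).prod := by rw [mul_assoc]
        _ = -(γ a * (γ ρ * (List.map γ t).prod)) := by rw [hac]; simp [mul_assoc]
        _ = -(γ a * (((-1 : ℂ) ^ (t.countP (fun x => x ≠ ρ))) • ((t.map γ).prod * γ ρ))) := by
            rw [ih]
        _ = ((-1 : ℂ) ^ (t.countP (fun x => x ≠ ρ) + if true = true then 1 else 0)) •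
              (γ a * (List.map γ t).prod * γ ρ) := by
            rw [mul_smul_comm, pow_add]; simp [mul_assoc]

/-- Trace of a product is zero if some `ρ` has odd complementary count. -/
lemma trace_zero {ρ : Fin N} {l : List (Fin N)}
    (h : Odd (l.countP (fun x => x ≠ ρ))) :
    Matrix.trace ((l.map γ).prod) = 0 := by
  have hm := move hγ ρ l
  rw [Odd.neg_one_pow h, neg_one_smul] at hm
  have h1 : Matrix.trace (γ ρ * γ ρ * (l.map γ).prod)
      = ε ρ * Matrix.trace ((l.map γ).prod) := by
    rw [sq hγ, smul_mul_assoc, one_mul, Matrix.trace_smul, smul_eq_mul]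
  have h2 : Matrix.trace (γ ρ * γ ρ * (l.map γ).prod)
      = - Matrix.trace (γ ρ * γ ρ * (l.map γ).prod) := by
    conv_lhs => rw [mul_assoc, hm]
    rw [mul_neg, Matrix.trace_neg, ← mul_assoc, Matrix.trace_mul_cycle (γ ρ) ((l.map γ).prod) (γ ρ)]
  have h3 : Matrix.trace (γ ρ * γ ρ * (l.map γ).prod) = 0 := by
    have h4 : (2 : ℂ) * Matrix.trace (γ ρ * γ ρ * (l.map γ).prod) = 0 := by
      linear_combination h2
    exact (mul_eq_zero.mp h4).resolve_left two_ne_zero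
  rw [h3] at h1
  exact (mul_eq_zero.mp h1.symm).resolve_left (ε_ne_zero ρ)

/-- Product over a nodup list squares to a nonzero scalar. -/
lemma sq_list : ∀ l : List (Fin N), l.Nodup →
    ∃ c : ℂ, c ≠ 0 ∧ (l.map γ).prod * (l.map γ).prod = c • 1
  | [], _ => ⟨1, one_ne_zero, by simp⟩
  | a :: t, h => by
    obtain ⟨ha, ht⟩ := List.nodup_cons.mp h
    obtain ⟨c, hc, hcc⟩ := sq_list t ht
    have hmv := move hγ a t
    have hcount : t.countP (fun x => x ≠ a) = t.length := by
      rw [List.countP_eq_length]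
      intro x hx
      simp only [decide_eq_true_eq]
      exact fun hxa => ha (hxa ▸ hx)
    rw [hcount] at hmv
    refine ⟨(-1 : ℂ) ^ t.length * c * ε a, by
      simp only [ε, mul_ne_zero_iff]
      refine ⟨⟨pow_ne_zero _ (by norm_num), hc⟩, ?_⟩
      split <;> norm_num, ?_⟩
    have key : (t.map γ).prod * γ a = ((-1 : ℂ) ^ t.length) • (γ a * (t.map γ).prod) := by
      have h2 : ((-1 : ℂ) ^ t.length) • (γ a * (t.map γ).prod)
          = ((-1 : ℂ) ^ t.length) • (((-1 : ℂ) ^ t.length) • ((t.map γ).prod * γ a)) := by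
        rw [hmv]
      rw [smul_smul, ← pow_add, ← two_mul, pow_mul, neg_one_sq, one_pow, one_smul] at h2
      exact h2.symm
    simp only [List.map_cons, List.prod_cons]
    calc γ a * (t.map γ).prod * (γ a * (t.map γ).prod)
        = γ a * ((t.map γ).prod * γ a) * (t.map γ).prod := by
          simp only [mul_assoc]
      _ = ((-1 : ℂ) ^ t.length) • (γ a * (γ a * (t.map γ).prod) * (t.map γ).prod) := by
          rw [key, mul_smul_comm, smul_mul_assoc]
      _ = ((-1 : ℂ) ^ t.length) • (γ a * γ a * ((t.map γ).prod * (t.map γ).prod)) := by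
          simp only [mul_assoc]
      _ = ((-1 : ℂ) ^ t.length * c * ε a) • 1 := by
          rw [hcc, sq hγ, smul_mul_assoc, one_mul, smul_smul, smul_smul]
          ring_nf

omit hγ in
lemma countP_nodup : ∀ l : List (Fin N), l.Nodup → ∀ ρ : Fin N,
    l.countP (fun x => x ≠ ρ) + (if ρ ∈ l then 1 else 0) = l.length
  | [], _, ρ => by simp
  | a :: t, h, ρ => by
    obtain ⟨ha, ht⟩ := List.nodup_cons.mp h
    have ih := countP_nodup t ht ρ
    simp only [List.countP_cons, List.mem_cons, List.length_cons, decide_eq_true_eq]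
    by_cases har : ρ = a
    · rw [if_neg (by simp [har]), if_pos (Or.inl har)]
      rw [if_neg (fun hm => ha (har ▸ hm))] at ih
      omega
    · rw [if_congr (or_iff_right har) rfl rfl,
        if_pos (show ¬ a = ρ from fun h2 => har h2.symm)]
      omega

/-- Trace orthogonality for distinct subsets. -/
lemma trace_G_ne (hN : Even N) {S T : Finset (Fin N)} (hST : S ≠ T) :
    Matrix.trace (((S.sort (· ≤ ·)).map γ).prod * ((T.sort (· ≤ ·)).map γ).prod) = 0 := by
  rw [← List.prod_append, ← List.map_append]
  -- find suitable ρ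
  have hcS : ∀ ρ : Fin N, (S.sort (· ≤ ·)).countP (fun x => x ≠ ρ)
      + (if ρ ∈ S then 1 else 0) = S.card := by
    intro ρ
    have := countP_nodup (S.sort (· ≤ ·)) (S.sort_nodup (· ≤ ·)) ρ
    simpa only [Finset.length_sort, Finset.mem_sort] using this
  have hcT : ∀ ρ : Fin N, (T.sort (· ≤ ·)).countP (fun x => x ≠ ρ)
      + (if ρ ∈ T then 1 else 0) = T.card := by
    intro ρ
    have := countP_nodup (T.sort (· ≤ ·)) (T.sort_nodup (· ≤ ·)) ρ
    simpa only [Finset.length_sort, Finset.mem_sort] using this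
  have key : ∃ ρ : Fin N, Odd ((S.sort (· ≤ ·) ++ T.sort (· ≤ ·)).countP (fun x => x ≠ ρ)) := by
    rcases Nat.even_or_odd (S.card + T.card) with hpar | hpar
    · -- pick ρ in exactly one of them
      have : ∃ ρ : Fin N, ¬ ((ρ ∈ S) ↔ (ρ ∈ T)) := by
        by_contra hcon
        push_neg at hcon
        exact hST (Finset.ext fun ρ => hcon ρ)
      obtain ⟨ρ, hρ⟩ := this
      refine ⟨ρ, ?_⟩
      rw [List.countP_append, Nat.odd_iff]
      have h1 := hcS ρ; have h2 := hcT ρ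
      rw [Nat.even_iff] at hpar
      by_cases hS : ρ ∈ S <;> by_cases hT : ρ ∈ T
      · exact absurd (iff_of_true hS hT) hρ
      · rw [if_pos hS] at h1; rw [if_neg hT] at h2; omega
      · rw [if_neg hS] at h1; rw [if_pos hT] at h2; omega
      · exact absurd (iff_of_false hS hT) hρ
    · -- pick ρ in both or neither
      have : ∃ ρ : Fin N, (ρ ∈ S) ↔ (ρ ∈ T) := by
        by_contra hcon
        push_neg at hcon
        have hTc : T = Sᶜ := by
          ext ρ
          have := hcon ρ
          simp only [Finset.mem_compl]
          tauto
        have := Finset.card_add_card_compl S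
        rw [Fintype.card_fin] at this
        rw [hTc] at hpar
        rw [Nat.odd_iff] at hpar
        obtain ⟨k, hk⟩ := hN
        omega
      obtain ⟨ρ, hρ⟩ := this
      refine ⟨ρ, ?_⟩
      rw [List.countP_append, Nat.odd_iff]
      have h1 := hcS ρ; have h2 := hcT ρ
      rw [Nat.odd_iff] at hpar
      by_cases hS : ρ ∈ S <;> by_cases hT : ρ ∈ T
      · rw [if_pos hS] at h1; rw [if_pos hT] at h2; omega
      · exact absurd (hρ.mp hS) hT
      · exact absurd (hρ.mpr hT) hS
      · rw [if_neg hS] at h1; rw [if_neg hT] at h2; omega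
  obtain ⟨ρ, hρ⟩ := key
  exact trace_zero hγ hρ

/-- Self pairing is a nonzero multiple of the identity. -/
lemma G_sq (S : Finset (Fin N)) :
    ∃ c : ℂ, c ≠ 0 ∧
      ((S.sort (· ≤ ·)).map γ).prod * ((S.sort (· ≤ ·)).map γ).prod = c • 1 :=
  sq_list hγ _ (S.sort_nodup (· ≤ ·))

end CliffAux


/-- For `N` even, the `2^N` ordered products of distinct Clifford generators
(indexed by subsets of `{0,…,N-1}`) are linearly independent over `ℂ`;
consequently `d² ≥ 2^N`, i.e. `d ≥ 2^{N/2}`. -/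
theorem cliffordProducts_linearIndependent {N d : ℕ} (hN : Even N) (hd : 0 < d)
    (γ : Fin N → Matrix (Fin d) (Fin d) ℂ)
    (hγ : ∀ μ ν : Fin N, γ μ * γ ν + γ ν * γ μ =
      (2 * (if μ = ν then (if (μ : ℕ) = 0 then (1 : ℂ) else -1) else 0)) • 1) :
    LinearIndependent ℂ
      (fun S : Finset (Fin N) => ((S.sort (· ≤ ·)).map γ).prod) ∧
    2 ^ N ≤ d ^ 2 ∧ 2 ^ (N / 2) ≤ d := by
  have hli : LinearIndependent ℂ
      (fun S : Finset (Fin N) => ((S.sort (· ≤ ·)).map γ).prod) := by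
    rw [Fintype.linearIndependent_iff]
    intro g hg T
    have h0 : Matrix.trace ((∑ S : Finset (Fin N),
        g S • ((S.sort (· ≤ ·)).map γ).prod) * ((T.sort (· ≤ ·)).map γ).prod) = 0 := by
      rw [hg]; simp
    rw [Finset.sum_mul] at h0
    simp only [smul_mul_assoc] at h0
    rw [Matrix.trace_sum] at h0
    simp only [Matrix.trace_smul, smul_eq_mul] at h0
    rw [Finset.sum_eq_single T
      (fun S _ hST => by rw [CliffAux.trace_G_ne hγ hN hST, mul_zero])
      (fun h => absurd (Finset.mem_univ T) h)] at h0
    obtain ⟨c, hc, hcc⟩ := CliffAux.G_sq hγ T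
    rw [hcc, Matrix.trace_smul, Matrix.trace_one] at h0
    simp only [smul_eq_mul, Fintype.card_fin] at h0
    have hd' : (d : ℂ) ≠ 0 := Nat.cast_ne_zero.mpr hd.ne'
    rcases mul_eq_zero.mp h0 with h | h
    · exact h
    · rcases mul_eq_zero.mp h with h' | h'
      · exact absurd h' hc
      · exact absurd h' hd'
  refine ⟨hli, ?_, ?_⟩
  · have hcard := hli.fintype_card_le_finrank
    rw [Fintype.card_finset, Fintype.card_fin, Module.finrank_matrix,
      Fintype.card_fin, Module.finrank_self, mul_one] at hcard
    calc 2 ^ N ≤ d * d := hcard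
      _ = d ^ 2 := (sq d).symm
  · have hcard := hli.fintype_card_le_finrank
    rw [Fintype.card_finset, Fintype.card_fin, Module.finrank_matrix,
      Fintype.card_fin, Module.finrank_self, mul_one] at hcard
    obtain ⟨k, hk⟩ := hN
    have hk2 : N / 2 = k := by omega
    rw [hk2]
    have h1 : (2 ^ k) ^ 2 ≤ d ^ 2 := by
      calc (2 ^ k) ^ 2 = 2 ^ N := by rw [← pow_mul]; congr 1; omega
        _ ≤ d * d := hcard
        _ = d ^ 2 := (sq d).symm
    exact (Nat.pow_le_pow_iff_left (by norm_num)).mp h1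
end

section
/- Let γ^0,…,γ^3 be 4×4 complex matrices satisfying the Clifford relations with g = diag(1,-1,-1,-1), and let C be an invertible 4×4 matrix with C^{-1} γ^μ C = -(γ^μ)^T for all μ. Assume irreducibility (the commutant of {γ^μ} is scalar). Then C^T = -C, i.e. the charge conjugation matrix is antisymmetric. -/
open Matrix

noncomputable section CCaux

/-- metric signs -/
def ccg (μ : Fin 4) : ℂ := if (μ : ℕ) = 0 then 1 else -1

lemma ccg_ne_zero (μ : Fin 4) : ccg μ ≠ 0 := by
  unfold ccg; split <;> norm_num

lemma ccg_0 : ccg 0 = 1 := rfl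
lemma ccg_1 : ccg 1 = -1 := rfl
lemma ccg_2 : ccg 2 = -1 := rfl
lemma ccg_3 : ccg 3 = -1 := rfl

lemma cc_vec7_0 {α : Type*} (h : 0 < 7) (a b c d e f g : α) : ![a,b,c,d,e,f,g] ⟨0, h⟩ = a := rfl
lemma cc_vec7_1 {α : Type*} (h : 1 < 7) (a b c d e f g : α) : ![a,b,c,d,e,f,g] ⟨1, h⟩ = b := rfl
lemma cc_vec7_2 {α : Type*} (h : 2 < 7) (a b c d e f g : α) : ![a,b,c,d,e,f,g] ⟨2, h⟩ = c := rfl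
lemma cc_vec7_3 {α : Type*} (h : 3 < 7) (a b c d e f g : α) : ![a,b,c,d,e,f,g] ⟨3, h⟩ = d := rfl
lemma cc_vec7_4 {α : Type*} (h : 4 < 7) (a b c d e f g : α) : ![a,b,c,d,e,f,g] ⟨4, h⟩ = e := rfl
lemma cc_vec7_5 {α : Type*} (h : 5 < 7) (a b c d e f g : α) : ![a,b,c,d,e,f,g] ⟨5, h⟩ = f := rfl
lemma cc_vec7_6 {α : Type*} (h : 6 < 7) (a b c d e f g : α) : ![a,b,c,d,e,f,g] ⟨6, h⟩ = g := rfl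


variable (γ : Fin 4 → Matrix (Fin 4) (Fin 4) ℂ)
variable (hγ : ∀ μ ν : Fin 4, γ μ * γ ν + γ ν * γ μ =
      (2 * (if μ = ν then (if (μ : ℕ) = 0 then (1 : ℂ) else -1) else 0)) • 1)

include hγ

lemma cc_sq (μ : Fin 4) : γ μ * γ μ = ccg μ • 1 := by
  have h := hγ μ μ
  simp only [if_pos rfl] at h
  have h2 : (2:ℂ) • (γ μ * γ μ) = (2:ℂ) • (ccg μ • 1) := by
    rw [two_smul, h, smul_smul]
    norm_num [ccg]
  have := smul_right_injective (Matrix (Fin 4) (Fin 4) ℂ) (two_ne_zero (α := ℂ)) h2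
  exact this

lemma cc_anti {μ ν : Fin 4} (h : μ ≠ ν) : γ μ * γ ν = -(γ ν * γ μ) := by
  have h2 := hγ μ ν
  rw [if_neg h] at h2
  simp only [mul_zero, zero_smul] at h2
  exact eq_neg_of_add_eq_zero_left h2

lemma cc_sw {μ ν : Fin 4} (h : μ ≠ ν) (X : Matrix (Fin 4) (Fin 4) ℂ) :
    γ μ * (γ ν * X) = -(γ ν * (γ μ * X)) := by
  rw [← mul_assoc, cc_anti γ hγ h, neg_mul, mul_assoc]

/-- if `γ δ` anticommutes with `X` then `trace X = 0` -/
lemma cc_tr_zero {δ : Fin 4} {X : Matrix (Fin 4) (Fin 4) ℂ}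
    (h : γ δ * X = -(X * γ δ)) : trace X = 0 := by
  have h1 : trace (X * (γ δ * γ δ)) = ccg δ * trace X := by
    rw [cc_sq γ hγ δ, mul_smul_comm, mul_one, trace_smul, smul_eq_mul]
  have h2 : trace (X * (γ δ * γ δ)) = -(ccg δ * trace X) := by
    calc trace (X * (γ δ * γ δ)) = trace ((X * γ δ) * γ δ) := by rw [mul_assoc]
    _ = trace (γ δ * (X * γ δ)) := by rw [trace_mul_comm]
    _ = trace ((γ δ * X) * γ δ) := by rw [mul_assoc]
    _ = trace (-((X * γ δ) * γ δ)) := by rw [h, neg_mul]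
    _ = -trace (X * (γ δ * γ δ)) := by rw [trace_neg, mul_assoc]
    _ = -(ccg δ * trace X) := by rw [h1]
  have h3 : ccg δ * trace X = 0 := by
    have h4 := h1.symm.trans h2
    linear_combination h4 / 2
  exact (mul_eq_zero.mp h3).resolve_left (ccg_ne_zero δ)

lemma cc_tr1 (μ : Fin 4) : trace (γ μ) = 0 := by
  obtain ⟨ν, hν⟩ := exists_ne μ
  exact cc_tr_zero γ hγ (cc_anti γ hγ hν)

lemma cc_tr2 {μ ν : Fin 4} (h : μ ≠ ν) : trace (γ μ * γ ν) = 0 := by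
  have h1 : trace (γ μ * γ ν) = trace (γ ν * γ μ) := trace_mul_comm _ _
  rw [cc_anti γ hγ h.symm, trace_neg] at h1
  linear_combination h1 / 2

lemma cc_tr3 {a b c : Fin 4} (hab : a ≠ b) (hac : a ≠ c) (hbc : b ≠ c) :
    trace (γ a * (γ b * γ c)) = 0 := by
  have hex : ∀ a b c : Fin 4, a ≠ b → a ≠ c → b ≠ c →
      ∃ δ : Fin 4, δ ≠ a ∧ δ ≠ b ∧ δ ≠ c := by decide
  obtain ⟨δ, hda, hdb, hdc⟩ := hex a b c hab hac hbc
  apply cc_tr_zero γ hγ (δ := δ)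
  calc γ δ * (γ a * (γ b * γ c)) = -(γ a * (γ δ * (γ b * γ c))) := cc_sw γ hγ hda _
    _ = -(γ a * (-(γ b * (γ δ * γ c)))) := by rw [cc_sw γ hγ hdb]
    _ = γ a * (γ b * (γ δ * γ c)) := by rw [mul_neg, neg_neg]
    _ = γ a * (γ b * (-(γ c * γ δ))) := by rw [cc_anti γ hγ hdc]
    _ = -(γ a * (γ b * γ c) * γ δ) := by rw [mul_neg, mul_neg, ← mul_assoc, ← mul_assoc,
        mul_assoc (γ a)]

/-- trace of single times double -/
lemma cc_tsd (a : Fin 4) {b c : Fin 4} (hbc : b ≠ c) :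
    trace (γ a * (γ b * γ c)) = 0 := by
  by_cases hab : a = b
  · subst hab
    rw [← mul_assoc, cc_sq γ hγ a, smul_mul_assoc, one_mul, trace_smul, cc_tr1 γ hγ,
      smul_zero]
  · by_cases hac : a = c
    · subst hac
      rw [← mul_assoc, trace_mul_comm, ← mul_assoc, cc_sq γ hγ a, smul_mul_assoc, one_mul,
        trace_smul, cc_tr1 γ hγ, smul_zero]
    · exact cc_tr3 γ hγ hab hac hbc

lemma cc_tds {b c : Fin 4} (a : Fin 4) (hbc : b ≠ c) :
    trace ((γ b * γ c) * γ a) = 0 := by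
  rw [trace_mul_comm]; exact cc_tsd γ hγ a hbc

/-- double times double sharing first index -/
lemma cc_tdd {x a b : Fin 4} (hab : a ≠ b) (hax : a ≠ x) (hbx : b ≠ x) :
    trace ((γ x * γ a) * (γ x * γ b)) = 0 := by
  have : (γ x * γ a) * (γ x * γ b) = -(ccg x • (γ a * γ b)) := by
    calc (γ x * γ a) * (γ x * γ b) = γ x * (γ a * (γ x * γ b)) := by rw [mul_assoc]
      _ = γ x * (-(γ x * (γ a * γ b))) := by rw [cc_sw γ hγ hax]
      _ = -((γ x * γ x) * (γ a * γ b)) := by rw [mul_neg, mul_assoc]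
      _ = -(ccg x • (γ a * γ b)) := by rw [cc_sq γ hγ x, smul_mul_assoc, one_mul]
  rw [this, trace_neg, trace_smul, cc_tr2 γ hγ hab, smul_zero, neg_zero]

lemma cc_trsq (μ : Fin 4) : trace (γ μ * γ μ) = ccg μ * 4 := by
  rw [cc_sq γ hγ μ, trace_smul, trace_one, smul_eq_mul]
  norm_num

lemma cc_tddsq {x a : Fin 4} (hax : a ≠ x) :
    trace ((γ x * γ a) * (γ x * γ a)) = -(ccg x * ccg a) * 4 := by
  have : (γ x * γ a) * (γ x * γ a) = -((ccg x * ccg a) • 1) := by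
    calc (γ x * γ a) * (γ x * γ a) = γ x * (γ a * (γ x * γ a)) := by rw [mul_assoc]
      _ = γ x * (-(γ x * (γ a * γ a))) := by rw [cc_sw γ hγ hax]
      _ = -((γ x * γ x) * (γ a * γ a)) := by rw [mul_neg, mul_assoc]
      _ = -((ccg x * ccg a) • 1) := by
          rw [cc_sq γ hγ x, cc_sq γ hγ a, smul_mul_assoc, mul_smul_comm, one_mul, smul_smul]
  rw [this, trace_neg, trace_smul, trace_one, smul_eq_mul]
  norm_num

def ccΓ (γ : Fin 4 → Matrix (Fin 4) (Fin 4) ℂ) : Fin 7 → Matrix (Fin 4) (Fin 4) ℂ :=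
  ![γ 0, γ 1, γ 2, γ 3, γ 0 * γ 1, γ 0 * γ 2, γ 0 * γ 3]

def ccd : Fin 7 → ℂ := ![4, -4, -4, -4, 4, 4, 4]

lemma ccd_ne_zero (i : Fin 7) : ccd i ≠ 0 := by
  fin_cases i <;> norm_num [ccd]

lemma cc_trΓ_diag (i : Fin 7) : trace (ccΓ γ i * ccΓ γ i) = ccd i := by
  fin_cases i <;> simp only [ccΓ, ccd, cc_vec7_0, cc_vec7_1, cc_vec7_2, cc_vec7_3, cc_vec7_4, cc_vec7_5, cc_vec7_6] <;>
  first
    | (rw [cc_trsq γ hγ]; norm_num [ccg_0, ccg_1, ccg_2, ccg_3])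
    | (rw [cc_tddsq γ hγ (by decide)]; norm_num [ccg_0, ccg_1, ccg_2, ccg_3])

lemma cc_trΓ_off (i j : Fin 7) (hij : i ≠ j) : trace (ccΓ γ i * ccΓ γ j) = 0 := by
  fin_cases i <;> fin_cases j <;> simp only [ccΓ, cc_vec7_0, cc_vec7_1, cc_vec7_2, cc_vec7_3, cc_vec7_4, cc_vec7_5, cc_vec7_6] <;>
  first
    | exact absurd rfl hij
    | (with_reducible exact cc_tr2 γ hγ (by decide))
    | (with_reducible exact cc_tsd γ hγ _ (by decide))
    | (with_reducible exact cc_tds γ hγ _ (by decide))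
    | (with_reducible exact cc_tdd γ hγ (by decide) (by decide) (by decide))

end CCaux

namespace CCaux

def ccp : Fin 6 → Fin 4 × Fin 4 := ![(0,1), (0,2), (0,3), (1,2), (1,3), (2,3)]

lemma ccp_surj : ∀ i j : Fin 4, i < j → ∃ k : Fin 6, (ccp k).1 = i ∧ (ccp k).2 = j := by
  decide

lemma antisym_eq_zero (S : Matrix (Fin 4) (Fin 4) ℂ) (h1 : Sᵀ = -S)
    (h2 : ∀ i j : Fin 4, i < j → S i j = 0) : S = 0 := by
  ext a b
  rcases lt_trichotomy a b with h | h | h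
  · simpa using h2 a b h
  · subst h
    have h3 : S a a = -S a a := by
      have := congrFun (congrFun h1 a) a
      simpa [Matrix.transpose_apply] using this
    have h4 : S a a = 0 := by linear_combination h3 / 2
    simpa using h4
  · have h3 : S b a = 0 := h2 b a h
    have h4 := congrFun (congrFun h1 b) a
    simp only [Matrix.transpose_apply, Matrix.neg_apply, h3, neg_zero] at h4
    simpa using h4

end CCaux

open CCaux in
/-- The charge-conjugation matrix `C`, defined by `C⁻¹ γ^μ C = -(γ^μ)ᵀ` for an
irreducible set of 4×4 Dirac matrices, is antisymmetric: `Cᵀ = -C`. -/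
theorem chargeConjugation_antisymmetric
    (γ : Fin 4 → Matrix (Fin 4) (Fin 4) ℂ)
    (hγ : ∀ μ ν : Fin 4, γ μ * γ ν + γ ν * γ μ =
      (2 * (if μ = ν then (if (μ : ℕ) = 0 then (1 : ℂ) else -1) else 0)) • 1)
    (C : Matrix (Fin 4) (Fin 4) ℂ) (hC : IsUnit C.det)
    (hCC : ∀ μ, C⁻¹ * γ μ * C = -(γ μ)ᵀ)
    (hirr : ∀ M : Matrix (Fin 4) (Fin 4) ℂ,
      (∀ μ, M * γ μ = γ μ * M) → ∃ c : ℂ, M = c • 1) :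
    Cᵀ = -C := by
  have hCC1 : C * C⁻¹ = 1 := mul_nonsing_inv C hC
  have hCC2 : C⁻¹ * C = 1 := nonsing_inv_mul C hC
  have hCT : IsUnit Cᵀ.det := by rwa [det_transpose]
  have hTT : (Cᵀ)⁻¹ * Cᵀ = 1 := nonsing_inv_mul _ hCT
  have hγT : ∀ μ, (γ μ)ᵀ = -(C⁻¹ * γ μ * C) := fun μ => by rw [hCC μ, neg_neg]
  -- Cᵀ * C⁻¹ commutes with all γ μ
  have hM : ∀ μ, (Cᵀ * C⁻¹) * γ μ = γ μ * (Cᵀ * C⁻¹) := by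
    intro μ
    have h1 := congrArg Matrix.transpose (hCC μ)
    rw [transpose_neg, transpose_transpose, transpose_mul, transpose_mul,
      transpose_nonsing_inv, hγT μ] at h1
    -- h1 : Cᵀ * (-(C⁻¹ * γ μ * C) * (Cᵀ)⁻¹) = -(γ μ)
    have h2 : Cᵀ * (C⁻¹ * γ μ * C * (Cᵀ)⁻¹) = γ μ := by
      have h2' := congrArg Neg.neg h1
      simpa [mul_neg, neg_mul, neg_neg] using h2'
    have h3 := congrArg (fun X => X * Cᵀ) h2
    simp only [mul_assoc] at h3 ⊢
    rw [hTT, mul_one] at h3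
    have h5 := congrArg (fun X => X * C⁻¹) h3
    simp only [mul_assoc] at h5
    rw [hCC1, mul_one] at h5
    exact h5
  obtain ⟨c, hc⟩ := hirr (Cᵀ * C⁻¹) hM
  have hCTc : Cᵀ = c • C := by
    calc Cᵀ = (Cᵀ * C⁻¹) * C := by rw [mul_assoc, hCC2, mul_one]
    _ = (c • 1) * C := by rw [hc]
    _ = c • C := by rw [smul_mul_assoc, one_mul]
  have hCne : C ≠ 0 := by
    intro h
    rw [h, det_zero] at hC
    exact (by norm_num : ¬ IsUnit (0 : ℂ)) hC
  have hc2 : c * c = 1 := by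
    have h6 : C = (c * c) • C := by
      conv_lhs => rw [← transpose_transpose C, hCTc, transpose_smul, hCTc, smul_smul]
    have h7 : (c * c - 1) • C = 0 := by
      rw [sub_smul, one_smul, ← h6, sub_self]
    rcases smul_eq_zero.mp h7 with h | h
    · linear_combination h
    · exact absurd h hCne
  rcases mul_self_eq_one_iff.mp hc2 with h | h
  swap
  · rw [hCTc, h, neg_smul, one_smul]
  -- now c = 1, derive a contradiction
  exfalso
  have hsym : Cᵀ = C := by rw [hCTc, h, one_smul]
  -- each γ μ * C is antisymmetric
  have hanti1 : ∀ μ, (γ μ * C)ᵀ = -(γ μ * C) := by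
    intro μ
    rw [transpose_mul, hsym, hγT μ, mul_neg, ← mul_assoc, ← mul_assoc, hCC1, one_mul]
  -- each (γ x * γ a) * C with a ≠ x is antisymmetric
  have hanti2 : ∀ x a : Fin 4, a ≠ x → ((γ x * γ a) * C)ᵀ = -((γ x * γ a) * C) := by
    intro x a hax
    rw [transpose_mul, hsym, transpose_mul, hγT x, hγT a]
    calc C * (-(C⁻¹ * γ a * C) * -(C⁻¹ * γ x * C))
        = C * (C⁻¹ * (γ a * ((C * C⁻¹) * (γ x * C)))) := by
          rw [neg_mul_neg]; simp only [mul_assoc]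
      _ = C * (C⁻¹ * (γ a * (γ x * C))) := by rw [hCC1, one_mul]
      _ = (C * C⁻¹) * (γ a * (γ x * C)) := by rw [mul_assoc]
      _ = (γ a * γ x) * C := by rw [hCC1, one_mul, mul_assoc]
      _ = -(γ x * γ a) * C := by rw [cc_anti γ hγ hax]
      _ = -((γ x * γ a) * C) := by rw [neg_mul]
  have hanti : ∀ i : Fin 7, (ccΓ γ i * C)ᵀ = -(ccΓ γ i * C) := by
    intro i
    fin_cases i <;> simp only [ccΓ, cc_vec7_0, cc_vec7_1, cc_vec7_2, cc_vec7_3, cc_vec7_4, cc_vec7_5, cc_vec7_6] <;>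
    first
      | (with_reducible exact hanti1 _)
      | (with_reducible exact hanti2 _ _ (by decide))
  -- the upper-triangular entry vectors of the 7 antisymmetric matrices are independent
  have li : LinearIndependent ℂ
      (fun i : Fin 7 => fun k : Fin 6 => (ccΓ γ i * C) (ccp k).1 (ccp k).2) := by
    rw [Fintype.linearIndependent_iff]
    intro f hf
    have hS0 : (∑ i : Fin 7, f i • (ccΓ γ i * C)) = 0 := by
      apply antisym_eq_zero
      · rw [transpose_sum]
        simp only [transpose_smul, hanti, smul_neg]
        rw [← Finset.sum_neg_distrib]
      · intro i j hij
        obtain ⟨k, hk1, hk2⟩ := ccp_surj i j hij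
        have hfk := congrFun hf k
        simp only [Finset.sum_apply, Pi.smul_apply, smul_eq_mul, Pi.zero_apply] at hfk
        subst hk1
        subst hk2
        rw [Matrix.sum_apply]
        simp only [Matrix.smul_apply, smul_eq_mul]
        exact hfk
    have hsum0 : (∑ i : Fin 7, f i • ccΓ γ i) = 0 := by
      have h8 : (∑ i : Fin 7, f i • ccΓ γ i) * C = 0 := by
        rw [Finset.sum_mul]
        simpa only [smul_mul_assoc] using hS0
      have h9 := congrArg (fun X => X * C⁻¹) h8
      simpa [mul_assoc, hCC1] using h9
    intro i
    have h10 : trace ((∑ j : Fin 7, f j • ccΓ γ j) * ccΓ γ i) = 0 := by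
      rw [hsum0, zero_mul, trace_zero]
    rw [Finset.sum_mul] at h10
    simp only [smul_mul_assoc, trace_sum, trace_smul, smul_eq_mul] at h10
    rw [Finset.sum_eq_single i] at h10
    · rw [cc_trΓ_diag γ hγ i] at h10
      exact (mul_eq_zero.mp h10).resolve_right (ccd_ne_zero γ hγ i)
    · intro j _ hji
      rw [cc_trΓ_off γ hγ j i hji, mul_zero]
    · intro hni
      exact absurd (Finset.mem_univ i) hni
  have hcard := li.fintype_card_le_finrank
  rw [Module.finrank_fintype_fun_eq_card] at hcard
  simp at hcard
end
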